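/- Let F be a field and let (a,b) be a non-vanishing solution to the discrete 2D Toda molecule over F. Then there exists a function f : ℤ × ℤ → F such that τ^{(s,t)}_n = det_{0 ≤ i,j < n}(f_{s+i,t+j}) is nonzero for all (s,t) ∈ ℤ² and n ≥ 0, and f gives the solution (a,b) through the dependent variable transformation: a^{(s,t)}_n = (τ^{(s+1,t)}_{n+1} τ^{(s,t)}_n)/(τ^{(s+1,t)}_n τ^{(s,t)}_{n+1}) for all n ≥ 0 and b^{(s,t)}_n = (τ^{(s,t+1)}_{n−1} τ^{(s,t)}_{n+1})/(τ^{(s,t+1)}_n τ^{(s,t)}_n) for all n ≥ 1. -/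

import Mathlib

/-- A solution to the discrete 2D Toda molecule. -/
def IsTodaSolution {F : Type*} [Field F] (a b : ℤ → ℤ → ℕ → F) : Prop :=
  (∀ (s t : ℤ) (n : ℕ), a s (t + 1) n + b (s + 1) t n = a s t n + b s t (n + 1)) ∧
  (∀ (s t : ℤ) (n : ℕ), a s (t + 1) n * b (s + 1) t (n + 1) = a s t (n + 1) * b s t (n + 1)) ∧
  (∀ s t : ℤ, b s t 0 = 0)

/-- The solution is non-vanishing: `a` nonzero for all `n ≥ 0`, `b` nonzero for all `n ≥ 1`. -/
def NonVanishing {F : Type*} [Field F] (a b : ℤ → ℤ → ℕ → F) : Prop :=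
  (∀ (s t : ℤ) (n : ℕ), a s t n ≠ 0) ∧ (∀ (s t : ℤ) (n : ℕ), b s t (n + 1) ≠ 0)

/-- `tau f s t n` is the `n × n` determinant `det_{0 ≤ i,j < n} (f (s+i, t+j))`. -/
noncomputable def tau {F : Type*} [Field F] (f : ℤ × ℤ → F) (s t : ℤ) (n : ℕ) : F :=
  Matrix.det (Matrix.of fun i j : Fin n => f (s + (i : ℕ), t + (j : ℕ)))

/-- `f` gives the solution `(a, b)` through the dependent variable transformation:
all determinants `τ` are nonzero, `a^{(s,t)}_n = τ^{(s+1,t)}_{n+1} τ^{(s,t)}_n /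
(τ^{(s+1,t)}_n τ^{(s,t)}_{n+1})` for `n ≥ 0`, and `b^{(s,t)}_n =
τ^{(s,t+1)}_{n-1} τ^{(s,t)}_{n+1} / (τ^{(s,t+1)}_n τ^{(s,t)}_n)` for `n ≥ 1`. -/
def GivesSol {F : Type*} [Field F] (f : ℤ × ℤ → F) (a b : ℤ → ℤ → ℕ → F) : Prop :=
  (∀ (s t : ℤ) (n : ℕ), tau f s t n ≠ 0) ∧
  (∀ (s t : ℤ) (n : ℕ),
    a s t n = tau f (s + 1) t (n + 1) * tau f s t n / (tau f (s + 1) t n * tau f s t (n + 1))) ∧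
  (∀ (s t : ℤ) (n : ℕ),
    b s t (n + 1) =
      tau f s (t + 1) n * tau f s t (n + 2) / (tau f s (t + 1) (n + 1) * tau f s t (n + 1)))


open Matrix Finset Equiv

section DJ
variable {F : Type*} [Field F]

def embA (n : ℕ) : Unit ⊕ Fin n ≃ Fin (n + 1) where
  toFun x := Sum.elim (fun _ => 0) Fin.succ x
  invFun j := if h : j = 0 then Sum.inl () else Sum.inr (j.pred h)
  left_inv := by rintro (⟨⟩ | i) <;> simp [Fin.succ_ne_zero]
  right_inv := by intro j; by_cases h : j = 0 <;> simp [h]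

def embD (n : ℕ) : Unit ⊕ Fin n ≃ Fin (n + 1) where
  toFun x := Sum.elim (fun _ => Fin.last n) Fin.castSucc x
  invFun j := if h : j = Fin.last n then Sum.inl () else Sum.inr (j.castPred h)
  left_inv := by
    rintro (⟨⟩ | i)
    · simp
    · simp [(Fin.castSucc_lt_last i).ne]
  right_inv := by intro j; by_cases h : j = Fin.last n <;> simp [h]

def e2 (n : ℕ) : Fin 2 ⊕ Fin n ≃ Fin (n + 2) where
  toFun x := Sum.elim (fun k => if k = 0 then 0 else Fin.last (n+1)) (fun i => i.castSucc.succ) x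
  invFun j := if h0 : (j : ℕ) = 0 then Sum.inl 0 else if hl : (j:ℕ) = n+1 then Sum.inl 1 else
    Sum.inr ⟨(j:ℕ) - 1, by omega⟩
  left_inv := by
    rintro (k | i)
    · fin_cases k <;> simp [Fin.last]
    · have h1 : ((i.castSucc.succ : Fin (n+2)) : ℕ) = (i:ℕ) + 1 := by simp
      have : (i:ℕ) < n := i.isLt
      simp only [Sum.elim_inr, h1]
      rw [dif_neg (by omega), dif_neg (by omega)]
      simp
  right_inv := by
    intro j
    have hj : (j:ℕ) < n+2 := j.isLt
    by_cases h0 : (j:ℕ) = 0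
    · simp only [dif_pos h0, Sum.elim_inl]; ext; simp [h0]
    · by_cases hl : (j:ℕ) = n+1
      · simp only [dif_neg h0, dif_pos hl, Sum.elim_inl]
        simp [Fin.ext_iff, Fin.last, hl]
      · simp only [dif_neg h0, dif_neg hl, Sum.elim_inr]
        simp [Fin.ext_iff]
        omega

lemma rot_embA (n : ℕ) (x : Unit ⊕ Fin n) :
    (finRotate (n+1)).symm (embA n x) = embD n x := by
  rw [Equiv.symm_apply_eq]
  rcases x with ⟨⟩ | i
  · simp [embA, embD, finRotate_last]
  · simp [embA, embD, finRotate_succ_apply, Fin.coeSucc_eq_succ]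

lemma det_embAD {n : ℕ} (N : Matrix (Fin (n+1)) (Fin (n+1)) F) :
    det (N.submatrix (embA n) (embD n)) = (-1)^n * det N := by
  have h : N.submatrix (embA n) (embD n)
      = (N.submatrix id ((finRotate (n+1)).symm : Equiv.Perm (Fin (n+1)))).submatrix (embA n) (embA n) := by
    ext x y
    simp only [Matrix.submatrix_apply, id_eq, rot_embA]
  rw [h, det_submatrix_equiv_self, det_permute']
  simp [sign_finRotate]

lemma det_embDA {n : ℕ} (N : Matrix (Fin (n+1)) (Fin (n+1)) F) :
    det (N.submatrix (embD n) (embA n)) = (-1)^n * det N := by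
  have h : N.submatrix (embD n) (embA n)
      = (N.submatrix ((finRotate (n+1)).symm : Equiv.Perm (Fin (n+1))) id).submatrix (embA n) (embA n) := by
    ext x y
    simp only [Matrix.submatrix_apply, id_eq, rot_embA]
  rw [h, det_submatrix_equiv_self, det_permute]
  simp [sign_finRotate]

lemma tau_dj (f : ℤ × ℤ → F) (s t : ℤ) (n : ℕ) (h : tau f (s+1) (t+1) n ≠ 0) :
    tau f s t (n+2) * tau f (s+1) (t+1) n =
      tau f s t (n+1) * tau f (s+1) (t+1) (n+1) -
      tau f (s+1) t (n+1) * tau f s (t+1) (n+1) := by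
  set S : Matrix (Fin n) (Fin n) F := Matrix.of (fun i j : Fin n => f (s+1 + (i:ℕ), t+1 + (j:ℕ))) with hSdef
  have hS : S.det ≠ 0 := h
  haveI : Invertible S := S.invertibleOfIsUnitDet (Ne.isUnit hS)
  set P : Matrix (Fin 2) (Fin 2) F :=
    Matrix.of (fun k l : Fin 2 =>
      f ((if k = 0 then s else s + (n:ℤ) + 1), (if l = 0 then t else t + (n:ℤ) + 1))) with hPdef
  set Q : Matrix (Fin 2) (Fin n) F :=
    Matrix.of (fun (k : Fin 2) (j : Fin n) =>
      f ((if k = 0 then s else s + (n:ℤ) + 1), t + 1 + (j:ℕ))) with hQdef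
  set R : Matrix (Fin n) (Fin 2) F :=
    Matrix.of (fun (i : Fin n) (l : Fin 2) =>
      f (s + 1 + (i:ℕ), (if l = 0 then t else t + (n:ℤ) + 1))) with hRdef
  set E : Matrix (Fin 2) (Fin 2) F := P - Q * ⅟S * R with hEdef
  -- corner entry lemma
  have entry : ∀ k l : Fin 2,
      ((Matrix.of fun (_ : Unit) (j : Fin n) => Q k j) * ⅟S *
        (Matrix.of fun (i : Fin n) (_ : Unit) => R i l)) () () = (Q * ⅟S * R) k l := by
    intro k l
    simp [Matrix.mul_apply]
  -- generic 1x1-corner Schur formula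
  have schur1 : ∀ (k l : Fin 2) (NB : Matrix (Unit ⊕ Fin n) (Unit ⊕ Fin n) F),
      NB = Matrix.fromBlocks (Matrix.of fun (_ _ : Unit) => P k l)
        (Matrix.of fun (_ : Unit) (j : Fin n) => Q k j)
        (Matrix.of fun (i : Fin n) (_ : Unit) => R i l) S →
      NB.det = S.det * E k l := by
    intro k l NB hNB
    rw [hNB, Matrix.det_fromBlocks₂₂]
    congr 1
    rw [Matrix.det_unique]
    simp only [Matrix.sub_apply, hEdef]
    rw [entry k l]
    simp
  -- block decompositions
  have hM : ((Matrix.of fun i j : Fin (n+2) => f (s + (i:ℕ), t + (j:ℕ))).submatrix (e2 n) (e2 n))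
      = Matrix.fromBlocks P Q R S := by
    ext x y
    rcases x with k | i <;> rcases y with l | j
    · fin_cases k <;> fin_cases l <;>
        (simp [e2, hPdef, Fin.last]; try (congr 2 <;> push_cast <;> ring))
    · fin_cases k <;>
        (simp [e2, hQdef, Fin.last, Fin.val_succ, Fin.coe_castSucc];
         try (congr 2 <;> push_cast <;> ring))
    · fin_cases l <;>
        (simp [e2, hRdef, Fin.last, Fin.val_succ, Fin.coe_castSucc];
         try (congr 2 <;> push_cast <;> ring))
    · simp [e2, hSdef, Fin.val_succ, Fin.coe_castSucc]
      try (congr 2 <;> push_cast <;> ring)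
  have hdetM : tau f s t (n+2) = S.det * (E 0 0 * E 1 1 - E 0 1 * E 1 0) := by
    have h0 := Matrix.det_submatrix_equiv_self (e2 n)
      (Matrix.of fun i j : Fin (n+2) => f (s + (i:ℕ), t + (j:ℕ)))
    rw [hM] at h0
    show (Matrix.of fun i j : Fin (n+2) => f (s + (i:ℕ), t + (j:ℕ))).det = _
    rw [← h0, Matrix.det_fromBlocks₂₂, ← hEdef, Matrix.det_fin_two]
  have hA : tau f s t (n+1) = S.det * E 0 0 := by
    have hsub : ((Matrix.of fun i j : Fin (n+1) => f (s + (i:ℕ), t + (j:ℕ))).submatrix (embA n) (embA n))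
        = Matrix.fromBlocks (Matrix.of fun (_ _ : Unit) => P 0 0)
          (Matrix.of fun (_ : Unit) (j : Fin n) => Q 0 j)
          (Matrix.of fun (i : Fin n) (_ : Unit) => R i 0) S := by
      ext x y
      rcases x with k | i <;> rcases y with l | j <;>
        (simp [embA, hPdef, hQdef, hRdef, hSdef, Fin.val_succ];
         try (congr 2 <;> push_cast <;> ring))
    have h0 := Matrix.det_submatrix_equiv_self (embA n)
      (Matrix.of fun i j : Fin (n+1) => f (s + (i:ℕ), t + (j:ℕ)))
    rw [hsub] at h0
    show (Matrix.of fun i j : Fin (n+1) => f (s + (i:ℕ), t + (j:ℕ))).det = _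
    rw [← h0]
    exact schur1 0 0 _ rfl
  have hD : tau f (s+1) (t+1) (n+1) = S.det * E 1 1 := by
    have hsub : ((Matrix.of fun i j : Fin (n+1) => f (s+1 + (i:ℕ), t+1 + (j:ℕ))).submatrix (embD n) (embD n))
        = Matrix.fromBlocks (Matrix.of fun (_ _ : Unit) => P 1 1)
          (Matrix.of fun (_ : Unit) (j : Fin n) => Q 1 j)
          (Matrix.of fun (i : Fin n) (_ : Unit) => R i 1) S := by
      ext x y
      rcases x with k | i <;> rcases y with l | j <;>
        (simp [embD, hPdef, hQdef, hRdef, hSdef, Fin.coe_castSucc, Fin.last];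
         try (congr 2 <;> push_cast <;> ring))
    have h0 := Matrix.det_submatrix_equiv_self (embD n)
      (Matrix.of fun i j : Fin (n+1) => f (s+1 + (i:ℕ), t+1 + (j:ℕ)))
    rw [hsub] at h0
    show (Matrix.of fun i j : Fin (n+1) => f (s+1 + (i:ℕ), t+1 + (j:ℕ))).det = _
    rw [← h0]
    exact schur1 1 1 _ rfl
  have hB : (-1:F)^n * tau f s (t+1) (n+1) = S.det * E 0 1 := by
    have hsub : ((Matrix.of fun i j : Fin (n+1) => f (s + (i:ℕ), t+1 + (j:ℕ))).submatrix (embA n) (embD n))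
        = Matrix.fromBlocks (Matrix.of fun (_ _ : Unit) => P 0 1)
          (Matrix.of fun (_ : Unit) (j : Fin n) => Q 0 j)
          (Matrix.of fun (i : Fin n) (_ : Unit) => R i 1) S := by
      ext x y
      rcases x with k | i <;> rcases y with l | j <;>
        (simp [embA, embD, hPdef, hQdef, hRdef, hSdef, Fin.val_succ, Fin.coe_castSucc, Fin.last];
         try (congr 2 <;> push_cast <;> ring))
    have h0 := det_embAD (Matrix.of fun i j : Fin (n+1) => f (s + (i:ℕ), t+1 + (j:ℕ)))
    rw [hsub] at h0
    calc (-1:F)^n * tau f s (t+1) (n+1) = (-1:F)^n * (Matrix.of fun i j : Fin (n+1) => f (s + (i:ℕ), t+1 + (j:ℕ))).det := rfl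
    _ = _ := by rw [← h0]; exact schur1 0 1 _ rfl
  have hC : (-1:F)^n * tau f (s+1) t (n+1) = S.det * E 1 0 := by
    have hsub : ((Matrix.of fun i j : Fin (n+1) => f (s+1 + (i:ℕ), t + (j:ℕ))).submatrix (embD n) (embA n))
        = Matrix.fromBlocks (Matrix.of fun (_ _ : Unit) => P 1 0)
          (Matrix.of fun (_ : Unit) (j : Fin n) => Q 1 j)
          (Matrix.of fun (i : Fin n) (_ : Unit) => R i 0) S := by
      ext x y
      rcases x with k | i <;> rcases y with l | j <;>
        (simp [embA, embD, hPdef, hQdef, hRdef, hSdef, Fin.val_succ, Fin.coe_castSucc, Fin.last];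
         try (congr 2 <;> push_cast <;> ring))
    have h0 := det_embDA (Matrix.of fun i j : Fin (n+1) => f (s+1 + (i:ℕ), t + (j:ℕ)))
    rw [hsub] at h0
    calc (-1:F)^n * tau f (s+1) t (n+1) = (-1:F)^n * (Matrix.of fun i j : Fin (n+1) => f (s+1 + (i:ℕ), t + (j:ℕ))).det := rfl
    _ = _ := by rw [← h0]; exact schur1 1 0 _ rfl
  have hsq : ((-1:F)^n) * ((-1:F)^n) = 1 := by
    rw [← pow_add]; exact Even.neg_one_pow ⟨n, rfl⟩
  have hBC : tau f (s+1) t (n+1) * tau f s (t+1) (n+1) = (S.det * E 1 0) * (S.det * E 0 1) := by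
    rw [← hC, ← hB]
    linear_combination (-(tau f (s+1) t (n+1) * tau f s (t+1) (n+1))) * hsq
  have hinner : tau f (s+1) (t+1) n = S.det := rfl
  rw [hdetM, hA, hD, hBC, hinner]
  ring

end DJ

section Rec
variable {F : Type*} [Field F] (a b : ℤ → ℤ → ℕ → F)

noncomputable def uP : ℕ → ℕ → F
  | 0, _ => 1
  | m+1, n => uP m (n+1) / b 0 (m:ℤ) (n+1)

noncomputable def uN : ℕ → ℕ → F
  | 0, 0 => 1
  | 0, n+1 => b 0 (-1) (n+1)
  | _+1, 0 => 1
  | m+1, n+1 => uN m n * b 0 (-(m:ℤ)-2) (n+1)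

noncomputable def uu : ℤ → ℕ → F
  | .ofNat m => uP b m
  | .negSucc m => uN b m

lemma uu_ofNat (m : ℕ) : uu b (m:ℤ) = uP b m := rfl
lemma uu_ofNat' (m : ℕ) : uu b (Int.ofNat m) = uP b m := rfl
lemma uu_negSucc (m : ℕ) : uu b (Int.negSucc m) = uN b m := rfl

lemma uP_ne (hb : ∀ s t n, b s t (n+1) ≠ 0) : ∀ m n, uP b m n ≠ 0 := by
  intro m
  induction m with
  | zero => intro n; simp [uP]
  | succ m ih => intro n; rw [uP]; exact div_ne_zero (ih _) (hb _ _ _)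

lemma uN_ne (hb : ∀ s t n, b s t (n+1) ≠ 0) : ∀ m n, uN b m n ≠ 0 := by
  intro m
  induction m with
  | zero => intro n; cases n with
    | zero => simp [uN]
    | succ n => rw [uN]; exact hb _ _ _
  | succ m ih => intro n; cases n with
    | zero => rw [uN]; exact one_ne_zero
    | succ n => rw [uN]; exact mul_ne_zero (ih _) (hb _ _ _)

lemma uu_ne (hb : ∀ s t n, b s t (n+1) ≠ 0) : ∀ t n, uu b t n ≠ 0 := by
  intro t
  cases t with
  | ofNat m => exact uP_ne b hb m
  | negSucc m => exact uN_ne b hb m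

lemma uu_step (hb : ∀ s t n, b s t (n+1) ≠ 0) (t : ℤ) (n : ℕ) :
    uu b (t+1) n * b 0 t (n+1) = uu b t (n+1) := by
  cases t with
  | ofNat m =>
    have h1 : (Int.ofNat m) + 1 = ((m+1 : ℕ) : ℤ) := by simp
    rw [h1, uu_ofNat, uu_ofNat']
    show uP b (m+1) n * _ = _
    rw [uP]
    have hbm : ((Int.ofNat m) : ℤ) = (m:ℤ) := rfl
    rw [hbm]
    exact div_mul_cancel₀ _ (hb _ _ _)
  | negSucc m =>
    cases m with
    | zero =>
      have h1 : (Int.negSucc 0) + 1 = ((0:ℕ):ℤ) := by decide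
      rw [h1, uu_ofNat]
      show uP b 0 n * b 0 (Int.negSucc 0) (n+1) = uN b 0 (n+1)
      rw [uP, uN]
      norm_num
      rfl
    | succ m =>
      have h1 : (Int.negSucc (m+1)) + 1 = Int.negSucc m := by
        rw [Int.negSucc_eq, Int.negSucc_eq]; push_cast; ring
      rw [h1, uu_negSucc, uu_negSucc]
      show uN b m n * _ = uN b (m+1) (n+1)
      rw [uN]
      congr 2
      rw [Int.negSucc_eq]; push_cast; ring

noncomputable def RP : ℕ → ℤ → ℕ → F
  | 0, t, n => uu b t n
  | m+1, t, n => a (m:ℤ) t n * RP m t n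

noncomputable def RN : ℕ → ℤ → ℕ → F
  | 0, t, n => uu b t n / a (-1) t n
  | m+1, t, n => RN m t n / a (-(m:ℤ)-2) t n

noncomputable def Rr : ℤ → ℤ → ℕ → F
  | .ofNat m => RP a b m
  | .negSucc m => RN a b m

lemma Rr_ofNat (m : ℕ) : Rr a b (m:ℤ) = RP a b m := rfl
lemma Rr_ofNat' (m : ℕ) : Rr a b (Int.ofNat m) = RP a b m := rfl
lemma Rr_negSucc (m : ℕ) : Rr a b (Int.negSucc m) = RN a b m := rfl
lemma Rr_zero : Rr a b 0 = uu b := rfl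

lemma Rr_ne (ha : ∀ s t n, a s t n ≠ 0) (hb : ∀ s t n, b s t (n+1) ≠ 0) :
    ∀ s t n, Rr a b s t n ≠ 0 := by
  intro s
  cases s with
  | ofNat m =>
    induction m with
    | zero => exact fun t n => uu_ne b hb t n
    | succ m ih =>
      intro t n
      show a (m:ℤ) t n * RP a b m t n ≠ 0
      exact mul_ne_zero (ha _ _ _) (ih t n)
  | negSucc m =>
    induction m with
    | zero =>
      intro t n
      show uu b t n / a (-1) t n ≠ 0
      exact div_ne_zero (uu_ne b hb t n) (ha _ _ _)
    | succ m ih =>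
      intro t n
      show RN a b m t n / _ ≠ 0
      exact div_ne_zero (ih t n) (ha _ _ _)

lemma Rr_step (ha : ∀ s t n, a s t n ≠ 0) (s t : ℤ) (n : ℕ) :
    Rr a b (s+1) t n = a s t n * Rr a b s t n := by
  cases s with
  | ofNat m =>
    have h1 : (Int.ofNat m) + 1 = ((m+1 : ℕ) : ℤ) := by simp
    rw [h1, Rr_ofNat]
    show RP a b (m+1) t n = _
    rw [RP]
    rfl
  | negSucc m =>
    cases m with
    | zero =>
      have h1 : (Int.negSucc 0) + 1 = ((0:ℕ):ℤ) := by decide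
      rw [h1, Rr_ofNat, Rr_negSucc]
      show uu b t n = a (Int.negSucc 0) t n * (uu b t n / a (-1) t n)
      have : (Int.negSucc 0) = (-1 : ℤ) := by decide
      rw [this, mul_comm, div_mul_cancel₀ _ (ha _ _ _)]
    | succ m =>
      have h1 : (Int.negSucc (m+1)) + 1 = Int.negSucc m := by
        rw [Int.negSucc_eq, Int.negSucc_eq]; push_cast; ring
      rw [h1, Rr_negSucc, Rr_negSucc]
      show RN a b m t n = a (Int.negSucc (m+1)) t n * (RN a b m t n / a (-(m:ℤ)-2) t n)
      have h2 : (Int.negSucc (m+1)) = -(m:ℤ)-2 := by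
        rw [Int.negSucc_eq]; push_cast; ring
      rw [h2, mul_comm, div_mul_cancel₀ _ (ha _ _ _)]

lemma Rr_t (ha : ∀ s t n, a s t n ≠ 0) (hb : ∀ s t n, b s t (n+1) ≠ 0)
    (heq2 : ∀ (s t : ℤ) (n : ℕ), a s (t + 1) n * b (s + 1) t (n + 1) = a s t (n + 1) * b s t (n + 1)) :
    ∀ s t n, Rr a b s (t+1) n * b s t (n+1) = Rr a b s t (n+1) := by
  intro s
  induction s using Int.induction_on with
  | zero => intro t n; exact uu_step b hb t n
  | succ i ih =>
    intro t n
    rw [Rr_step a b ha, Rr_step a b ha]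
    calc a (i:ℤ) (t+1) n * Rr a b (i:ℤ) (t+1) n * b ((i:ℤ)+1) t (n+1)
        = (a (i:ℤ) (t+1) n * b ((i:ℤ)+1) t (n+1)) * Rr a b (i:ℤ) (t+1) n := by ring
      _ = (a (i:ℤ) t (n+1) * b (i:ℤ) t (n+1)) * Rr a b (i:ℤ) (t+1) n := by rw [heq2]
      _ = a (i:ℤ) t (n+1) * (Rr a b (i:ℤ) (t+1) n * b (i:ℤ) t (n+1)) := by ring
      _ = a (i:ℤ) t (n+1) * Rr a b (i:ℤ) t (n+1) := by rw [ih]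
  | pred i ih =>
    intro t n
    set s' : ℤ := -(i:ℤ) - 1 with hs'
    have hstep : ∀ t' n', Rr a b (-(i:ℤ)) t' n' = a s' t' n' * Rr a b s' t' n' := by
      intro t' n'
      have : (-(i:ℤ)) = s' + 1 := by rw [hs']; ring
      rw [this, Rr_step a b ha]
    have ih' := ih t n
    rw [hstep, hstep] at ih'
    have h2 : a s' (t+1) n * b (s'+1) t (n+1) = a s' t (n+1) * b s' t (n+1) := heq2 s' t n
    have hs1 : s' + 1 = -(i:ℤ) := by rw [hs']; ring
    rw [hs1] at h2
    apply mul_left_cancel₀ (ha s' t (n+1))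
    calc a s' t (n+1) * (Rr a b s' (t+1) n * b s' t (n+1))
        = (a s' t (n+1) * b s' t (n+1)) * Rr a b s' (t+1) n := by ring
      _ = (a s' (t+1) n * b (-(i:ℤ)) t (n+1)) * Rr a b s' (t+1) n := by rw [← h2]
      _ = a s' (t+1) n * Rr a b s' (t+1) n * b (-(i:ℤ)) t (n+1) := by ring
      _ = a s' t (n+1) * Rr a b s' t (n+1) := ih'

noncomputable def gg (s t : ℤ) (n : ℕ) : F := ∏ k ∈ Finset.range n, Rr a b s t k

lemma gg_zero (s t : ℤ) : gg a b s t 0 = 1 := by simp [gg]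

lemma gg_succ (s t : ℤ) (n : ℕ) : gg a b s t (n+1) = gg a b s t n * Rr a b s t n := by
  simp [gg, prod_range_succ]

lemma gg_ne (ha : ∀ s t n, a s t n ≠ 0) (hb : ∀ s t n, b s t (n+1) ≠ 0) (s t : ℤ) (n : ℕ) :
    gg a b s t n ≠ 0 :=
  prod_ne_zero_iff.mpr fun k _ => Rr_ne a b ha hb s t k

lemma gg_s (ha : ∀ s t n, a s t n ≠ 0) (s t : ℤ) (n : ℕ) :
    gg a b (s+1) t n = (∏ j ∈ Finset.range n, a s t j) * gg a b s t n := by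
  induction n with
  | zero => simp [gg]
  | succ n ih =>
    rw [gg_succ, gg_succ, ih, prod_range_succ, Rr_step a b ha]
    ring

lemma gg_t (ha : ∀ s t n, a s t n ≠ 0) (hb : ∀ s t n, b s t (n+1) ≠ 0)
    (heq2 : ∀ (s t : ℤ) (n : ℕ), a s (t + 1) n * b (s + 1) t (n + 1) = a s t (n + 1) * b s t (n + 1))
    (s t : ℤ) (n : ℕ) :
    gg a b s (t+1) n * (∏ j ∈ Finset.range n, b s t (j+1)) * Rr a b s t 0 = gg a b s t (n+1) := by
  induction n with
  | zero => simp [gg_zero, gg_succ]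
  | succ n ih =>
    rw [gg_succ, gg_succ, prod_range_succ, ← ih]
    have h := Rr_t a b ha hb heq2 s t n
    linear_combination (gg a b s (t+1) n * (∏ j ∈ Finset.range n, b s t (j+1)) * Rr a b s t 0 +
      gg a b s t (n+1)) * 0 + (gg a b s (t+1) n * (∏ j ∈ Finset.range n, b s t (j+1)) * Rr a b s t 0) * h

lemma key_prod
    (heq1 : ∀ (s t : ℤ) (n : ℕ), a s (t + 1) n + b (s + 1) t n = a s t n + b s t (n + 1))
    (heq2 : ∀ (s t : ℤ) (n : ℕ), a s (t + 1) n * b (s + 1) t (n + 1) = a s t (n + 1) * b s t (n + 1))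
    (hb0 : ∀ s t : ℤ, b s t 0 = 0) (s t : ℤ) :
    ∀ n, (∏ j ∈ Finset.range n, a s (t+1) j) * b s t (n+1) =
      (∏ j ∈ Finset.range (n+1), a s (t+1) j) - (∏ j ∈ Finset.range (n+1), a s t j) := by
  intro n
  induction n with
  | zero =>
    simp only [zero_add, prod_range_zero, prod_range_one, one_mul]
    linear_combination - heq1 s t 0 + hb0 (s+1) t
  | succ n ih =>
    rw [prod_range_succ (f := fun j => a s (t+1) j) (n := n+1),
        prod_range_succ (f := fun j => a s t j) (n := n+1),
        prod_range_succ (f := fun j => a s (t+1) j) (n := n)]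
    rw [prod_range_succ (f := fun j => a s (t+1) j) (n := n)] at ih
    rw [prod_range_succ (f := fun j => a s t j) (n := n)] at ih ⊢
    linear_combination (-((∏ j ∈ Finset.range n, a s (t+1) j) * a s (t+1) n)) * heq1 s t (n+1) +
      (∏ j ∈ Finset.range n, a s (t+1) j) * heq2 s t n + a s t (n+1) * ih

lemma gg_hirota (ha : ∀ s t n, a s t n ≠ 0) (hb : ∀ s t n, b s t (n+1) ≠ 0)
    (heq1 : ∀ (s t : ℤ) (n : ℕ), a s (t + 1) n + b (s + 1) t n = a s t n + b s t (n + 1))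
    (heq2 : ∀ (s t : ℤ) (n : ℕ), a s (t + 1) n * b (s + 1) t (n + 1) = a s t (n + 1) * b s t (n + 1))
    (hb0 : ∀ s t : ℤ, b s t 0 = 0) (s t : ℤ) (n : ℕ) :
    gg a b s t (n+2) * gg a b (s+1) (t+1) n =
      gg a b s t (n+1) * gg a b (s+1) (t+1) (n+1) -
      gg a b (s+1) t (n+1) * gg a b s (t+1) (n+1) := by
  have h1 := gg_s a b ha (s := s) (t := t+1) (n := n)
  have h2 := gg_s a b ha (s := s) (t := t+1) (n := n+1)
  have h3 := gg_s a b ha (s := s) (t := t) (n := n+1)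
  have h4 := gg_t a b ha hb heq2 s t n
  have h5 := gg_t a b ha hb heq2 s t (n+1)
  have h6 := key_prod a b heq1 heq2 hb0 s t n
  rw [h1, h2, h3, ← h4, ← h5]
  rw [prod_range_succ (f := fun j => b s t (j+1)) (n := n)]
  rw [prod_range_succ (f := fun j => a s (t+1) j) (n := n)] at h6 ⊢
  linear_combination (gg a b s (t+1) n * gg a b s (t+1) (n+1) *
    (∏ j ∈ Finset.range n, b s t (j+1)) * Rr a b s t 0) * h6


lemma tau_eq (a b : ℤ → ℤ → ℕ → F)
    (ha : ∀ s t n, a s t n ≠ 0) (hb : ∀ s t n, b s t (n+1) ≠ 0)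
    (heq1 : ∀ (s t : ℤ) (n : ℕ), a s (t + 1) n + b (s + 1) t n = a s t n + b s t (n + 1))
    (heq2 : ∀ (s t : ℤ) (n : ℕ), a s (t + 1) n * b (s + 1) t (n + 1) = a s t (n + 1) * b s t (n + 1))
    (hb0 : ∀ s t : ℤ, b s t 0 = 0) :
    ∀ (n : ℕ) (s t : ℤ), tau (fun p : ℤ × ℤ => Rr a b p.1 p.2 0) s t n = gg a b s t n := by
  intro n
  induction n using Nat.strong_induction_on with
  | _ n ih =>
    rcases n with _ | _ | m
    · intro s t
      simp [tau, Matrix.det_fin_zero, gg]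
    · intro s t
      simp [tau, Matrix.det_fin_one, gg]
    · intro s t
      have hinner : tau (fun p : ℤ × ℤ => Rr a b p.1 p.2 0) (s+1) (t+1) m ≠ 0 := by
        rw [ih m (by omega)]
        exact gg_ne a b ha hb _ _ _
      have hdj := tau_dj (fun p : ℤ × ℤ => Rr a b p.1 p.2 0) s t m hinner
      rw [ih (m+1) (by omega), ih (m+1) (by omega), ih (m+1) (by omega),
          ih (m+1) (by omega), ih m (by omega)] at hdj
      have hh := gg_hirota a b ha hb heq1 heq2 hb0 s t m
      exact mul_right_cancel₀ (gg_ne a b ha hb (s+1) (t+1) m) (hdj.trans hh.symm)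

end Rec

/-- Every non-vanishing solution `(a, b)` to the discrete 2D Toda molecule
arises from some function `f : ℤ² → F` through the dependent variable transformation. -/
theorem exists_givesSol {F : Type*} [Field F] (a b : ℤ → ℤ → ℕ → F)
    (hT : IsTodaSolution a b) (hnv : NonVanishing a b) :
    ∃ f : ℤ × ℤ → F, GivesSol f a b := by
  obtain ⟨heq1, heq2, hb0⟩ := hT
  obtain ⟨ha, hb⟩ := hnv
  have hte := tau_eq a b ha hb heq1 heq2 hb0
  refine ⟨fun p : ℤ × ℤ => Rr a b p.1 p.2 0, ?_, ?_, ?_⟩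
  · intro s t n
    rw [hte]
    exact gg_ne a b ha hb s t n
  · intro s t n
    simp only [hte]
    have h1 : gg a b (s+1) t n ≠ 0 := gg_ne a b ha hb _ _ _
    have h2 : gg a b s t n ≠ 0 := gg_ne a b ha hb _ _ _
    have h3 : Rr a b s t n ≠ 0 := Rr_ne a b ha hb _ _ _
    rw [gg_succ a b (s+1) t n, gg_succ a b s t n, Rr_step a b ha]
    field_simp
  · intro s t n
    simp only [hte]
    have h1 : gg a b s (t+1) n ≠ 0 := gg_ne a b ha hb _ _ _
    have h2 : gg a b s t (n+1) ≠ 0 := gg_ne a b ha hb _ _ _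
    have h3 : Rr a b s (t+1) n ≠ 0 := Rr_ne a b ha hb _ _ _
    have e : n + 2 = n + 1 + 1 := rfl
    rw [e, gg_succ a b s t (n+1), gg_succ a b s (t+1) n, ← Rr_t a b ha hb heq2 s t n]
    field_simp
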